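/- arXiv:0909.3367 — 2 statements merged into one kernel-verified Lean document; each statement's English description precedes it below -/
import Mathlib

section
/- (Additional singularities of Q_{(3:−1)}, Case 16) Let b ∈ ℂ satisfy b^2 + 4b + 7 = 0. Then the point η := (1,1,1,1,1,b,b,−4−b,−4−b,3) ∈ ℂ^{10} satisfies S_1(η) = 0 and there exists μ ∈ ℂ with (∂F_{3,−1}/∂x_i)(η) = μ for all i = 0,…,9; that is, η is a singular point of the hyperquintic Q_{(3:−1)} = {3·S_5 − S_2·S_3 = 0} in ℙ^8(ℂ). -/
open MvPolynomial

private lemma mes_zero (s : Multiset ℂ) : s.esymm 0 = 1 := by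
  simp [Multiset.esymm]

private lemma mes_nil (n : ℕ) : (0 : Multiset ℂ).esymm (n+1) = 0 := by
  simp [Multiset.esymm, Multiset.powersetCard_zero_right]

private lemma mes_cons (a : ℂ) (s : Multiset ℂ) (n : ℕ) :
    (a ::ₘ s).esymm (n+1) = a * s.esymm n + s.esymm (n+1) := by
  simp [Multiset.esymm, Multiset.powersetCard_cons, Multiset.map_map, Function.comp_def,
    Multiset.sum_map_mul_left, add_comm]

private lemma mes_single (a : ℂ) (n : ℕ) :
    ({a} : Multiset ℂ).esymm (n+1) = a * (0 : Multiset ℂ).esymm n := by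
  rw [← Multiset.cons_zero, mes_cons, mes_nil, add_zero]

private lemma pderiv_prod_X_not_mem {i : Fin 10} {t : Finset (Fin 10)} (h : i ∉ t) :
    pderiv i (∏ j ∈ t, (X j : MvPolynomial (Fin 10) ℂ)) = 0 := by
  classical
  induction t using Finset.induction_on with
  | empty => simp
  | @insert a s hx ih =>
    have ha : a ≠ i := fun he => h (he ▸ Finset.mem_insert_self a s)
    rw [Finset.prod_insert hx, pderiv_mul, ih (fun hm => h (Finset.mem_insert_of_mem hm)),
      pderiv_X_of_ne ha]
    ring

private lemma eval_esymm' (x : Fin 10 → ℂ) (n : ℕ) :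
    eval x (esymm (Fin 10) ℂ n) = (Finset.univ.val.map x).esymm n := by
  rw [esymm, Finset.esymm_map_val, map_sum]
  exact Finset.sum_congr rfl fun t _ => by rw [map_prod]; simp

private lemma eval_pderiv_esymm (x : Fin 10 → ℂ) (i : Fin 10) (n : ℕ) :
    eval x (pderiv i (esymm (Fin 10) ℂ (n+1)))
      = ((Finset.univ.erase i).val.map x).esymm n := by
  classical
  have huniv : (Finset.univ : Finset (Fin 10)) = insert i (Finset.univ.erase i) :=
    (Finset.insert_erase (Finset.mem_univ i)).symm
  have hdisj : Disjoint (Finset.powersetCard (n+1) (Finset.univ.erase i))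
      ((Finset.powersetCard n (Finset.univ.erase i)).image (insert i)) := by
    rw [Finset.disjoint_left]
    intro t ht ht'
    obtain ⟨u, hu, rfl⟩ := Finset.mem_image.mp ht'
    have hsub := (Finset.mem_powersetCard.mp ht).1
    exact Finset.notMem_erase i Finset.univ (hsub (Finset.mem_insert_self i u))
  rw [esymm]
  conv_lhs => rw [huniv, Finset.powersetCard_succ_insert (Finset.notMem_erase i _),
    Finset.sum_union hdisj]
  rw [map_add, map_sum, map_sum]
  have h1 : ∀ t ∈ Finset.powersetCard (n+1) (Finset.univ.erase i),
      pderiv i (∏ j ∈ t, (X j : MvPolynomial (Fin 10) ℂ)) = 0 := by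
    intro t ht
    exact pderiv_prod_X_not_mem fun hm =>
      Finset.notMem_erase i Finset.univ ((Finset.mem_powersetCard.mp ht).1 hm)
  rw [Finset.sum_congr rfl h1]
  simp only [Finset.sum_const_zero, map_zero, zero_add]
  have hinj : ∀ u ∈ Finset.powersetCard n (Finset.univ.erase i),
      ∀ v ∈ Finset.powersetCard n (Finset.univ.erase i), insert i u = insert i v → u = v := by
    intro u hu v hv he
    have hiu : i ∉ u := fun h => Finset.notMem_erase i _ ((Finset.mem_powersetCard.mp hu).1 h)
    have hiv : i ∉ v := fun h => Finset.notMem_erase i _ ((Finset.mem_powersetCard.mp hv).1 h)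
    rw [← Finset.erase_insert hiu, ← Finset.erase_insert hiv, he]
  rw [Finset.sum_image hinj, Finset.esymm_map_val, map_sum]
  refine Finset.sum_congr rfl fun u hu => ?_
  have hiu : i ∉ u := fun h => Finset.notMem_erase i _ ((Finset.mem_powersetCard.mp hu).1 h)
  rw [Finset.prod_insert hiu, pderiv_mul, pderiv_X_self, pderiv_prod_X_not_mem hiu,
    one_mul, mul_zero, add_zero, map_prod]
  simp

private lemma eval_pderiv_esymm5 (x : Fin 10 → ℂ) (i : Fin 10) :
    eval x (pderiv i (esymm (Fin 10) ℂ 5)) = ((Finset.univ.erase i).val.map x).esymm 4 :=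
  eval_pderiv_esymm x i 4

private lemma eval_pderiv_esymm3 (x : Fin 10 → ℂ) (i : Fin 10) :
    eval x (pderiv i (esymm (Fin 10) ℂ 3)) = ((Finset.univ.erase i).val.map x).esymm 2 :=
  eval_pderiv_esymm x i 2

private lemma eval_pderiv_esymm2 (x : Fin 10 → ℂ) (i : Fin 10) :
    eval x (pderiv i (esymm (Fin 10) ℂ 2)) = ((Finset.univ.erase i).val.map x).esymm 1 :=
  eval_pderiv_esymm x i 1

/-- **Case 16, additional singularities of `Q_{(3:−1)}`.** If `b² + 4b + 7 = 0`,
then the point `η = (1,1,1,1,1,b,b,−4−b,−4−b,3)` satisfies `S₁(η) = 0` and is a singular point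
of the hyperquintic `Q_{(3:−1)} = {3·S₅ − S₂·S₃ = 0}` in `ℙ⁸(ℂ)`. -/
theorem case16_additional_singularity (b : ℂ) (hb : b ^ 2 + 4 * b + 7 = 0) (η : Fin 10 → ℂ)
    (hη : η = ![1, 1, 1, 1, 1, b, b, -4 - b, -4 - b, 3]) :
    eval η (esymm (Fin 10) ℂ 1) = 0 ∧
    ∃ μ : ℂ, ∀ i, eval η (pderiv i
      (C (3 : ℂ) * esymm (Fin 10) ℂ 5
        + C (-1 : ℂ) * (esymm (Fin 10) ℂ 2 * esymm (Fin 10) ℂ 3))) = μ := by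
  have e0 : η 0 = 1 := by rw [hη]; rfl
  have e1 : η 1 = 1 := by rw [hη]; rfl
  have e2 : η 2 = 1 := by rw [hη]; rfl
  have e3 : η 3 = 1 := by rw [hη]; rfl
  have e4 : η 4 = 1 := by rw [hη]; rfl
  have e5 : η 5 = b := by rw [hη]; rfl
  have e6 : η 6 = b := by rw [hη]; rfl
  have e7 : η 7 = -4 - b := by rw [hη]; rfl
  have e8 : η 8 = -4 - b := by rw [hη]; rfl
  have e9 : η 9 = 3 := by rw [hη]; rfl
  have huv : (Finset.univ : Finset (Fin 10)).val = {0,1,2,3,4,5,6,7,8,9} := by decide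
  constructor
  · rw [eval_esymm', huv]
    simp only [Multiset.insert_eq_cons, Multiset.map_cons, Multiset.map_zero,
      Multiset.map_singleton, mes_cons, mes_zero, mes_nil, mes_single,
      e0, e1, e2, e3, e4, e5, e6, e7, e8, e9]
    ring
  · refine ⟨54, fun i => ?_⟩
    rw [map_add, pderiv_C_mul, pderiv_C_mul, pderiv_mul, map_add, map_mul, map_mul, eval_C,
      eval_C, map_add, map_mul, map_mul, eval_pderiv_esymm5, eval_pderiv_esymm2,
      eval_pderiv_esymm3, eval_esymm', eval_esymm', huv]
    fin_cases i
    · beta_reduce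
      have hv : ((Finset.univ : Finset (Fin 10)).erase ⟨0, by norm_num⟩).val = {1,2,3,4,5,6,7,8,9} := by decide
      rw [hv]
      simp only [Multiset.insert_eq_cons, Multiset.map_cons, Multiset.map_zero,
        Multiset.map_singleton, mes_cons, mes_zero, mes_nil, mes_single,
        e0, e1, e2, e3, e4, e5, e6, e7, e8, e9]
      linear_combination (-b^2 - 4*b - 31) * hb
    · beta_reduce
      have hv : ((Finset.univ : Finset (Fin 10)).erase ⟨1, by norm_num⟩).val = {0,2,3,4,5,6,7,8,9} := by decide
      rw [hv]
      simp only [Multiset.insert_eq_cons, Multiset.map_cons, Multiset.map_zero,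
        Multiset.map_singleton, mes_cons, mes_zero, mes_nil, mes_single,
        e0, e1, e2, e3, e4, e5, e6, e7, e8, e9]
      linear_combination (-b^2 - 4*b - 31) * hb
    · beta_reduce
      have hv : ((Finset.univ : Finset (Fin 10)).erase ⟨2, by norm_num⟩).val = {0,1,3,4,5,6,7,8,9} := by decide
      rw [hv]
      simp only [Multiset.insert_eq_cons, Multiset.map_cons, Multiset.map_zero,
        Multiset.map_singleton, mes_cons, mes_zero, mes_nil, mes_single,
        e0, e1, e2, e3, e4, e5, e6, e7, e8, e9]
      linear_combination (-b^2 - 4*b - 31) * hb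
    · beta_reduce
      have hv : ((Finset.univ : Finset (Fin 10)).erase ⟨3, by norm_num⟩).val = {0,1,2,4,5,6,7,8,9} := by decide
      rw [hv]
      simp only [Multiset.insert_eq_cons, Multiset.map_cons, Multiset.map_zero,
        Multiset.map_singleton, mes_cons, mes_zero, mes_nil, mes_single,
        e0, e1, e2, e3, e4, e5, e6, e7, e8, e9]
      linear_combination (-b^2 - 4*b - 31) * hb
    · beta_reduce
      have hv : ((Finset.univ : Finset (Fin 10)).erase ⟨4, by norm_num⟩).val = {0,1,2,3,5,6,7,8,9} := by decide
      rw [hv]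
      simp only [Multiset.insert_eq_cons, Multiset.map_cons, Multiset.map_zero,
        Multiset.map_singleton, mes_cons, mes_zero, mes_nil, mes_single,
        e0, e1, e2, e3, e4, e5, e6, e7, e8, e9]
      linear_combination (-b^2 - 4*b - 31) * hb
    · beta_reduce
      have hv : ((Finset.univ : Finset (Fin 10)).erase ⟨5, by norm_num⟩).val = {0,1,2,3,4,6,7,8,9} := by decide
      rw [hv]
      simp only [Multiset.insert_eq_cons, Multiset.map_cons, Multiset.map_zero,
        Multiset.map_singleton, mes_cons, mes_zero, mes_nil, mes_single,
        e0, e1, e2, e3, e4, e5, e6, e7, e8, e9]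
      linear_combination (-2*b^2 - 34) * hb
    · beta_reduce
      have hv : ((Finset.univ : Finset (Fin 10)).erase ⟨6, by norm_num⟩).val = {0,1,2,3,4,5,7,8,9} := by decide
      rw [hv]
      simp only [Multiset.insert_eq_cons, Multiset.map_cons, Multiset.map_zero,
        Multiset.map_singleton, mes_cons, mes_zero, mes_nil, mes_single,
        e0, e1, e2, e3, e4, e5, e6, e7, e8, e9]
      linear_combination (-2*b^2 - 34) * hb
    · beta_reduce
      have hv : ((Finset.univ : Finset (Fin 10)).erase ⟨7, by norm_num⟩).val = {0,1,2,3,4,5,6,8,9} := by decide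
      rw [hv]
      simp only [Multiset.insert_eq_cons, Multiset.map_cons, Multiset.map_zero,
        Multiset.map_singleton, mes_cons, mes_zero, mes_nil, mes_single,
        e0, e1, e2, e3, e4, e5, e6, e7, e8, e9]
      linear_combination (-2*b^2 - 16*b - 66) * hb
    · beta_reduce
      have hv : ((Finset.univ : Finset (Fin 10)).erase ⟨8, by norm_num⟩).val = {0,1,2,3,4,5,6,7,9} := by decide
      rw [hv]
      simp only [Multiset.insert_eq_cons, Multiset.map_cons, Multiset.map_zero,
        Multiset.map_singleton, mes_cons, mes_zero, mes_nil, mes_single,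
        e0, e1, e2, e3, e4, e5, e6, e7, e8, e9]
      linear_combination (-2*b^2 - 16*b - 66) * hb
    · beta_reduce
      have hv : ((Finset.univ : Finset (Fin 10)).erase ⟨9, by norm_num⟩).val = {0,1,2,3,4,5,6,7,8} := by decide
      rw [hv]
      simp only [Multiset.insert_eq_cons, Multiset.map_cons, Multiset.map_zero,
        Multiset.map_singleton, mes_cons, mes_zero, mes_nil, mes_single,
        e0, e1, e2, e3, e4, e5, e6, e7, e8, e9]
      linear_combination (-b^2 - 4*b - 31) * hb
end

section
/- (Case 2) Let α, β ∈ ℂ with (α, β) ≠ (0, 0), and let η := (1,1,1,1,1,1,1,1,1,−9) ∈ ℂ^{10}. Then there exists μ ∈ ℂ with (∂F_{α,β}/∂x_i)(η) = μ for all i = 0,…,9 if and only if 7α = 75β; that is, η is a singular point of the hyperquintic Q_{(α:β)} exactly for (α : β) = (75 : 7). -/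
set_option maxRecDepth 100000

open MvPolynomial

private def etaZ : Fin 10 → ℤ := ![1, 1, 1, 1, 1, 1, 1, 1, 1, -9]

private lemma pderiv_prod_X {σ : Type*} [DecidableEq σ] (j : σ) (t : Finset σ) :
    pderiv j (∏ i ∈ t, (X i : MvPolynomial σ ℂ)) =
      if j ∈ t then ∏ i ∈ t.erase j, X i else 0 := by
  induction t using Finset.induction_on with
  | empty => simp
  | insert _ _ ha ih =>
    rename_i a s
    rw [Finset.prod_insert ha, pderiv_mul, ih]
    by_cases hja : j = a
    · subst hja
      simp [ha, Finset.erase_insert ha]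
    · rw [pderiv_X_of_ne (Ne.symm hja), zero_mul, zero_add]
      by_cases hjs : j ∈ s
      · rw [if_pos hjs, if_pos (Finset.mem_insert_of_mem hjs),
          Finset.erase_insert_of_ne (Ne.symm hja),
          Finset.prod_insert (fun h => ha (Finset.mem_of_mem_erase h))]
      · simp [hjs, hja]

private lemma esymm_val (η : Fin 10 → ℂ) (hcast : ∀ i, η i = (etaZ i : ℂ)) (k : ℕ) (v : ℤ)
    (hv : ∑ t ∈ Finset.powersetCard k (Finset.univ : Finset (Fin 10)), ∏ i ∈ t, etaZ i = v) :
    eval η (esymm (Fin 10) ℂ k) = (v : ℂ) := by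
  calc eval η (esymm (Fin 10) ℂ k)
      = ∑ t ∈ Finset.powersetCard k (Finset.univ : Finset (Fin 10)),
          ((∏ i ∈ t, etaZ i : ℤ) : ℂ) := by
        rw [esymm, map_sum]
        refine Finset.sum_congr rfl fun t _ => ?_
        rw [eval_prod, Int.cast_prod]
        exact Finset.prod_congr rfl fun i _ => by rw [eval_X, hcast]
    _ = ((∑ t ∈ Finset.powersetCard k (Finset.univ : Finset (Fin 10)),
          ∏ i ∈ t, etaZ i : ℤ) : ℂ) := by rw [Int.cast_sum]
    _ = (v : ℂ) := by rw [hv]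

private lemma pderiv_esymm_val (η : Fin 10 → ℂ) (hcast : ∀ i, η i = (etaZ i : ℂ))
    (j : Fin 10) (k : ℕ) (v : ℤ)
    (hv : ∑ t ∈ Finset.powersetCard k (Finset.univ : Finset (Fin 10)),
      (if j ∈ t then ∏ i ∈ t.erase j, etaZ i else 0) = v) :
    eval η (pderiv j (esymm (Fin 10) ℂ k)) = (v : ℂ) := by
  calc eval η (pderiv j (esymm (Fin 10) ℂ k))
      = ∑ t ∈ Finset.powersetCard k (Finset.univ : Finset (Fin 10)),
          ((if j ∈ t then ∏ i ∈ t.erase j, etaZ i else 0 : ℤ) : ℂ) := by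
        rw [esymm, map_sum, map_sum]
        refine Finset.sum_congr rfl fun t _ => ?_
        rw [pderiv_prod_X]
        split
        · rw [eval_prod, Int.cast_prod]
          exact Finset.prod_congr rfl fun i _ => by rw [eval_X, hcast]
        · simp
    _ = ((∑ t ∈ Finset.powersetCard k (Finset.univ : Finset (Fin 10)),
          (if j ∈ t then ∏ i ∈ t.erase j, etaZ i else 0) : ℤ) : ℂ) := by rw [Int.cast_sum]
    _ = (v : ℂ) := by rw [hv]

/-- **Case 2.** For `(α, β) ≠ (0, 0)`, the point `η = (1,…,1,−9)` is a singular
point of the hyperquintic `Q_{(α:β)} = {α·S₅ + β·S₂·S₃ = 0}` in `ℙ⁸(ℂ)` if and only if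
`7α = 75β`, i.e. exactly for `(α : β) = (75 : 7)`. -/
theorem case2_singular_iff (α β : ℂ) (hαβ : (α, β) ≠ (0, 0)) (η : Fin 10 → ℂ)
    (hη : η = ![1, 1, 1, 1, 1, 1, 1, 1, 1, -9]) :
    (∃ μ : ℂ, ∀ i, eval η (pderiv i
        (C α * esymm (Fin 10) ℂ 5 + C β * (esymm (Fin 10) ℂ 2 * esymm (Fin 10) ℂ 3))) = μ)
      ↔ 7 * α = 75 * β := by
  have hcast : ∀ i, η i = (etaZ i : ℂ) := by
    subst hη; intro i; fin_cases i <;> norm_num [etaZ]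
  have hE2 : eval η (esymm (Fin 10) ℂ 2) = ((-45 : ℤ) : ℂ) :=
    esymm_val η hcast 2 (-45) (by decide)
  have hE3 : eval η (esymm (Fin 10) ℂ 3) = ((-240 : ℤ) : ℂ) :=
    esymm_val η hcast 3 (-240) (by decide)
  have hform : ∀ i, eval η (pderiv i
      (C α * esymm (Fin 10) ℂ 5 + C β * (esymm (Fin 10) ℂ 2 * esymm (Fin 10) ℂ 3))) =
      α * eval η (pderiv i (esymm (Fin 10) ℂ 5)) +
      β * (eval η (pderiv i (esymm (Fin 10) ℂ 2)) * eval η (esymm (Fin 10) ℂ 3) +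
           eval η (esymm (Fin 10) ℂ 2) * eval η (pderiv i (esymm (Fin 10) ℂ 3))) := by
    intro i
    simp only [map_add, pderiv_C_mul, pderiv_mul, pderiv_C, eval_add, eval_mul, eval_C,
      eval_zero, zero_mul, zero_add, mul_add]
  have hval : ∀ i, eval η (pderiv i
      (C α * esymm (Fin 10) ℂ 5 + C β * (esymm (Fin 10) ℂ 2 * esymm (Fin 10) ℂ 3))) =
      if i = 9 then 126 * α - 3780 * β else -434 * α + 2220 * β := by
    intro i
    rw [hform i, hE2, hE3]
    fin_cases i <;>
      first
        | · rw [pderiv_esymm_val η hcast _ 5 (-434) (by decide),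
              pderiv_esymm_val η hcast _ 2 (-1) (by decide),
              pderiv_esymm_val η hcast _ 3 (-44) (by decide),
              if_neg (by decide)]
            push_cast
            ring
        | · rw [pderiv_esymm_val η hcast _ 5 126 (by decide),
              pderiv_esymm_val η hcast _ 2 9 (by decide),
              pderiv_esymm_val η hcast _ 3 36 (by decide),
              if_pos (by decide)]
            push_cast
            ring
  constructor
  · rintro ⟨μ, hμ⟩
    have h0 := (hval 0).symm.trans (hμ 0)
    have h9 := (hval 9).symm.trans (hμ 9)
    rw [if_neg (by decide)] at h0
    rw [if_pos rfl] at h9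
    have h : -434 * α + 2220 * β = 126 * α - 3780 * β := by rw [h0, h9]
    linear_combination -h / 80
  · intro h
    refine ⟨-434 * α + 2220 * β, fun i => ?_⟩
    rw [hval i]
    split
    · linear_combination 80 * h
    · rfl
end
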